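/- Any approximation of the contraction semigroup e^{tG} transfers to a completely positive approximation of its conjugation semigroup: let G and M be d×d complex matrices, Δt ≥ 0, N ∈ ℕ, C ≥ 0; assume ‖exp(tG)‖ ≤ 1 for all t ≥ 0 and ‖exp(Δt·G) − M‖ ≤ C·Δt^{N+1}. Then for every d×d matrix ρ, ‖exp(Δt·G) ρ exp(Δt·G)ᴴ − M ρ Mᴴ‖₁ ≤ C·Δt^{N+1}·(2 + C·Δt^{N+1})·‖ρ‖₁. -/

import Mathlib

open Matrix
open scoped ComplexOrder

/-- The positive semidefinite square root of a matrix (defined to be `0` if the matrix is not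
positive semidefinite). -/
noncomputable def matSqrt {d : ℕ} (A : Matrix (Fin d) (Fin d) ℂ) : Matrix (Fin d) (Fin d) ℂ :=
  open scoped Classical in
  if h : A.PosSemidef then
    (h.1.eigenvectorUnitary : Matrix (Fin d) (Fin d) ℂ) *
      diagonal (fun i => ((Real.sqrt (h.1.eigenvalues i) : ℝ) : ℂ)) *
      (star h.1.eigenvectorUnitary : Matrix (Fin d) (Fin d) ℂ)
  else 0

/-- The trace norm `‖A‖₁ = Re (Tr √(AᴴA))` of a complex matrix. -/
noncomputable def traceNorm {d : ℕ} (A : Matrix (Fin d) (Fin d) ℂ) : ℝ :=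
  (Matrix.trace (matSqrt (Aᴴ * A))).re

/-- The operator norm of a matrix induced by the Euclidean (ℓ²) norm on `ℂ^d`. -/
noncomputable def opNorm {d : ℕ} (A : Matrix (Fin d) (Fin d) ℂ) : ℝ :=
  ‖Matrix.toEuclideanCLM (𝕜 := ℂ) A‖

lemma spec_eq {d : ℕ} {A : Matrix (Fin d) (Fin d) ℂ} (hA : A.IsHermitian) :
    A = (hA.eigenvectorUnitary : Matrix (Fin d) (Fin d) ℂ) *
      diagonal (fun i => ((hA.eigenvalues i : ℝ) : ℂ)) *
      star (hA.eigenvectorUnitary : Matrix (Fin d) (Fin d) ℂ) := by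
  conv_lhs => rw [hA.spectral_theorem]
  simp only [Unitary.conjStarAlgAut_apply]
  rfl

noncomputable def Matrix.PosSemidef.sqrt {d : ℕ} {A : Matrix (Fin d) (Fin d) ℂ}
    (h : A.PosSemidef) : Matrix (Fin d) (Fin d) ℂ :=
  (h.1.eigenvectorUnitary : Matrix (Fin d) (Fin d) ℂ) *
      diagonal (fun i => ((Real.sqrt (h.1.eigenvalues i) : ℝ) : ℂ)) *
      (star h.1.eigenvectorUnitary : Matrix (Fin d) (Fin d) ℂ)

lemma Matrix.PosSemidef.posSemidef_sqrt {d : ℕ} {A : Matrix (Fin d) (Fin d) ℂ}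
    (h : A.PosSemidef) : h.sqrt.PosSemidef := by
  have hD : (diagonal (fun i => ((Real.sqrt (h.1.eigenvalues i) : ℝ) : ℂ))).PosSemidef :=
    Matrix.PosSemidef.diagonal fun i => Complex.zero_le_real.mpr (Real.sqrt_nonneg _)
  have := hD.mul_mul_conjTranspose_same (h.1.eigenvectorUnitary : Matrix (Fin d) (Fin d) ℂ)
  simpa [Matrix.PosSemidef.sqrt, Matrix.star_eq_conjTranspose] using this

lemma Matrix.PosSemidef.sqrt_mul_self {d : ℕ} {A : Matrix (Fin d) (Fin d) ℂ}
    (h : A.PosSemidef) : h.sqrt * h.sqrt = A := by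
  set U := (h.1.eigenvectorUnitary : Matrix (Fin d) (Fin d) ℂ) with hU
  have hUU : star U * U = 1 :=
    Matrix.mem_unitaryGroup_iff'.mp (Matrix.IsHermitian.eigenvectorUnitary h.1).2
  have hsq : diagonal (fun i => ((Real.sqrt (h.1.eigenvalues i) : ℝ) : ℂ)) *
      diagonal (fun i => ((Real.sqrt (h.1.eigenvalues i) : ℝ) : ℂ)) =
      diagonal (fun i => ((h.1.eigenvalues i : ℝ) : ℂ)) := by
    rw [Matrix.diagonal_mul_diagonal]
    congr 1; funext i
    rw [← Complex.ofReal_mul, Real.mul_self_sqrt (h.eigenvalues_nonneg i)]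
  have e : h.sqrt = U * diagonal (fun i => ((Real.sqrt (h.1.eigenvalues i) : ℝ) : ℂ)) *
      star U := by
    simp [Matrix.PosSemidef.sqrt, hU]
  rw [e]
  conv_rhs => rw [spec_eq h.1]
  rw [← hsq]
  calc U * diagonal (fun i => ((Real.sqrt (h.1.eigenvalues i) : ℝ) : ℂ)) * star U *
        (U * diagonal (fun i => ((Real.sqrt (h.1.eigenvalues i) : ℝ) : ℂ)) * star U)
      = U * diagonal (fun i => ((Real.sqrt (h.1.eigenvalues i) : ℝ) : ℂ)) * (star U * U) *
        diagonal (fun i => ((Real.sqrt (h.1.eigenvalues i) : ℝ) : ℂ)) * star U := by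
        simp only [mul_assoc]
    _ = _ := by rw [hUU, mul_one]; simp only [mul_assoc]; rfl

open scoped Matrix.Norms.L2Operator

lemma opNorm_eq {d : ℕ} (A : Matrix (Fin d) (Fin d) ℂ) : opNorm A = ‖A‖ := rfl

lemma matSqrt_of_psd {d : ℕ} {A : Matrix (Fin d) (Fin d) ℂ} (h : A.PosSemidef) :
    matSqrt A = h.sqrt := dif_pos h

lemma re_trace_psd_nonneg {d : ℕ} {P : Matrix (Fin d) (Fin d) ℂ} (hP : P.PosSemidef) :
    0 ≤ (Matrix.trace P).re := by
  simpa using (Complex.le_def.mp hP.trace_nonneg).1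

lemma traceNorm_nonneg {d : ℕ} (A : Matrix (Fin d) (Fin d) ℂ) : 0 ≤ traceNorm A := by
  have h := Matrix.posSemidef_conjTranspose_mul_self A
  rw [traceNorm, matSqrt_of_psd h]
  exact re_trace_psd_nonneg h.posSemidef_sqrt

lemma re_trace_mul_psd_le {d : ℕ} (B P : Matrix (Fin d) (Fin d) ℂ) (hP : P.PosSemidef) :
    (Matrix.trace (B * P)).re ≤ ‖B‖ * (Matrix.trace P).re := by
  set Q := hP.sqrt with hQdef
  have hQQ : Q * Q = P := hP.sqrt_mul_self
  have hQH : Qᴴ = Q := hP.posSemidef_sqrt.1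
  have hQs : ∀ a b, star (Q b a) = Q a b := by
    intro a b
    conv_rhs => rw [← hQH, Matrix.conjTranspose_apply]
  have h1 : Matrix.trace (B * P) = Matrix.trace (Q * (B * Q)) := by
    rw [← hQQ, ← mul_assoc, Matrix.trace_mul_comm]
  rw [h1, Matrix.trace, Complex.re_sum]
  have key : ∀ i, ((Q * (B * Q)).diag i).re ≤ ‖B‖ * (P.diag i).re := by
    intro i
    set v : Fin d → ℂ := fun j => Q j i with hv
    set x : EuclideanSpace ℂ (Fin d) := WithLp.toLp 2 v with hx
    set y : EuclideanSpace ℂ (Fin d) := WithLp.toLp 2 (B *ᵥ v) with hy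
    have hdiag : (Q * (B * Q)).diag i = inner ℂ x y := by
      rw [EuclideanSpace.inner_toLp_toLp, dotProduct_comm]
      simp only [Matrix.diag_apply, Matrix.mul_apply, dotProduct, Matrix.mulVec,
        Pi.star_apply, hv]
      refine Finset.sum_congr rfl fun j _ => ?_
      rw [hQs i j]
    have hxx : ‖x‖ ^ 2 = (P.diag i).re := by
      rw [← inner_self_eq_norm_sq (𝕜 := ℂ), EuclideanSpace.inner_toLp_toLp, dotProduct_comm]
      have h2 : dotProduct (star v) v = P i i := by
        rw [← hQQ]
        simp only [dotProduct, Matrix.mul_apply, Pi.star_apply, hv]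
        exact Finset.sum_congr rfl fun j _ => by rw [hQs i j]
      rw [h2]; rfl
    have hyb : ‖y‖ ≤ ‖B‖ * ‖x‖ := Matrix.l2_opNorm_mulVec B x
    calc ((Q * (B * Q)).diag i).re = (inner ℂ x y).re := by rw [hdiag]
      _ ≤ ‖(inner ℂ x y)‖ := Complex.re_le_norm _
      _ ≤ ‖x‖ * ‖y‖ := norm_inner_le_norm x y
      _ ≤ ‖x‖ * (‖B‖ * ‖x‖) := mul_le_mul_of_nonneg_left hyb (norm_nonneg x)
      _ = ‖B‖ * ‖x‖ ^ 2 := by ring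
      _ = ‖B‖ * (P.diag i).re := by rw [hxx]
  calc ∑ i, ((Q * (B * Q)).diag i).re ≤ ∑ i, ‖B‖ * (P.diag i).re :=
        Finset.sum_le_sum fun i _ => key i
    _ = ‖B‖ * (Matrix.trace P).re := by
        rw [← Finset.mul_sum, Matrix.trace, Complex.re_sum]

lemma exists_polar {d : ℕ} (A : Matrix (Fin d) (Fin d) ℂ) :
    ∃ K : Matrix (Fin d) (Fin d) ℂ, ‖K‖ ≤ 1 ∧ K * A = matSqrt (Aᴴ * A) ∧
      Kᴴ * matSqrt (Aᴴ * A) = A := by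
  have hA : (Aᴴ * A).PosSemidef := Matrix.posSemidef_conjTranspose_mul_self A
  have hmat : matSqrt (Aᴴ * A) = hA.sqrt := matSqrt_of_psd hA
  set P := hA.sqrt with hPdef
  have hPP : P * P = Aᴴ * A := hA.sqrt_mul_self
  have hP : P.PosSemidef := hA.posSemidef_sqrt
  have hPH : P.IsHermitian := hP.1
  set V : Matrix (Fin d) (Fin d) ℂ :=
    (Matrix.IsHermitian.eigenvectorUnitary hPH : Matrix (Fin d) (Fin d) ℂ) with hVdef
  have hV1 : star V * V = 1 :=
    Matrix.mem_unitaryGroup_iff'.mp (Matrix.IsHermitian.eigenvectorUnitary hPH).2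
  have hV2 : V * star V = 1 :=
    Matrix.mem_unitaryGroup_iff.mp (Matrix.IsHermitian.eigenvectorUnitary hPH).2
  set s := hPH.eigenvalues with hsdef
  set c : Fin d → ℂ := fun i => (s i : ℂ) with hcdef
  have hspec : P = V * Matrix.diagonal c * star V := spec_eq hPH
  set g : Fin d → ℂ := fun i => if s i = 0 then 0 else (c i)⁻¹ with hgdef
  set h : Fin d → ℂ := fun i => if s i = 0 then 0 else 1 with hhdef
  have key : ∀ a b : Fin d → ℂ, (V * Matrix.diagonal a * star V) *
      (V * Matrix.diagonal b * star V) = V * Matrix.diagonal (a * b) * star V := by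
    intro a b
    calc (V * Matrix.diagonal a * star V) * (V * Matrix.diagonal b * star V)
        = V * (Matrix.diagonal a * ((star V * V) * (Matrix.diagonal b * star V))) := by
          simp only [mul_assoc]
      _ = V * (Matrix.diagonal a * Matrix.diagonal b * star V) := by
          rw [hV1, one_mul, mul_assoc]
      _ = V * Matrix.diagonal (a * b) * star V := by
          rw [Matrix.diagonal_mul_diagonal, mul_assoc]
          rfl
  have conjT : ∀ a : Fin d → ℂ, (V * Matrix.diagonal a * star V)ᴴ =
      V * Matrix.diagonal (star a) * star V := by
    intro a
    calc (V * Matrix.diagonal a * star V)ᴴ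
        = (star V)ᴴ * ((Matrix.diagonal a)ᴴ * Vᴴ) := by
          rw [Matrix.conjTranspose_mul, Matrix.conjTranspose_mul]
      _ = V * (Matrix.diagonal (star a) * star V) := by
          rw [Matrix.diagonal_conjTranspose, ← Matrix.star_eq_conjTranspose V,
            ← Matrix.star_eq_conjTranspose (star V), star_star]
      _ = V * Matrix.diagonal (star a) * star V := by rw [mul_assoc]
  have hcne : ∀ i, s i ≠ 0 → c i ≠ 0 := by
    intro i hi
    simp only [hcdef, ne_eq, Complex.ofReal_eq_zero]
    exact hi
  have hgcc : g * (c * c) = c := by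
    funext i
    by_cases hi : s i = 0
    · simp [hgdef, hcdef, hi]
    · simp only [Pi.mul_apply, hgdef, if_neg hi]
      field_simp
  have hcg : c * g = h := by
    funext i
    by_cases hi : s i = 0
    · simp [hgdef, hhdef, hi]
    · simp only [Pi.mul_apply, hgdef, hhdef, if_neg hi]
      have := hcne i hi
      field_simp
  have hgc : g * c = h := by
    rw [← hcg]; funext i; simp [mul_comm]
  have hstarg : star g = g := by
    funext i
    by_cases hi : s i = 0 <;>
      simp [hgdef, hi, hcdef, ← Complex.ofReal_inv]
  have hstarh : star h = h := by
    funext i; by_cases hi : s i = 0 <;> simp [hhdef, hi]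
  have hhh : h * h = h := by
    funext i; by_cases hi : s i = 0 <;> simp [hhdef, hi]
  have hAA : Aᴴ * A = V * Matrix.diagonal (c * c) * star V := by
    rw [← hPP, hspec, key]
  set K := V * Matrix.diagonal g * star V * Aᴴ with hKdef
  have hgccg : g * (c * c * g) = h := by
    funext i
    by_cases hi : s i = 0
    · simp [hgdef, hhdef, hi]
    · simp only [Pi.mul_apply, hgdef, hhdef, if_neg hi]
      have := hcne i hi
      field_simp
  have hKA : K * A = P := by
    calc K * A = V * Matrix.diagonal g * star V * (Aᴴ * A) := by
          rw [hKdef, mul_assoc]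
      _ = V * Matrix.diagonal g * star V * (V * Matrix.diagonal (c * c) * star V) := by
          rw [hAA]
      _ = V * Matrix.diagonal (g * (c * c)) * star V := key _ _
      _ = P := by rw [hgcc, ← hspec]
  have hKH : Kᴴ = A * (V * Matrix.diagonal g * star V) := by
    rw [hKdef, Matrix.conjTranspose_mul, Matrix.conjTranspose_conjTranspose, conjT, hstarg]
  -- columns of A*V with zero eigenvalue vanish
  have hAVdag : (A * V)ᴴ * (A * V) = Matrix.diagonal (c * c) := by
    rw [Matrix.conjTranspose_mul]
    calc Vᴴ * Aᴴ * (A * V) = Vᴴ * (Aᴴ * A) * V := by simp only [mul_assoc]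
      _ = star V * (V * Matrix.diagonal (c * c) * star V) * V := by
          rw [hAA, Matrix.star_eq_conjTranspose]
      _ = (star V * V) * Matrix.diagonal (c * c) * (star V * V) := by
          simp only [mul_assoc]
      _ = Matrix.diagonal (c * c) := by rw [hV1, one_mul, mul_one]
  have hcol : ∀ i, s i = 0 → ∀ j, (A * V) j i = 0 := by
    intro i hi j
    set U := A * V with hU
    have h0 : (Uᴴ * U) i i = 0 := by
      rw [hAVdag, Matrix.diagonal_apply_eq]
      simp [hcdef, hi]
    have hz : dotProduct (star (fun j => U j i)) (fun j => U j i) = 0 := by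
      rw [← h0]
      simp [Matrix.mul_apply, dotProduct, Matrix.conjTranspose_apply]
    have hz2 := dotProduct_star_self_eq_zero.mp hz
    exact congrFun hz2 j
  have hAVh : A * V * Matrix.diagonal h = A * V := by
    ext j i
    rw [Matrix.mul_diagonal]
    by_cases hi : s i = 0
    · rw [hcol i hi j]; ring
    · simp [hhdef, hi]
  have hKP : Kᴴ * P = A := by
    calc Kᴴ * P = A * ((V * Matrix.diagonal g * star V) * (V * Matrix.diagonal c * star V)) := by
          rw [hKH, hspec, mul_assoc]
      _ = A * (V * Matrix.diagonal h * star V) := by rw [key, hgc]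
      _ = A * V * Matrix.diagonal h * star V := by rw [← mul_assoc, ← mul_assoc]
      _ = A * V * star V := by rw [hAVh]
      _ = A := by rw [mul_assoc, hV2, mul_one]
  -- norm bound
  have hKKH : K * Kᴴ = V * Matrix.diagonal h * star V := by
    rw [hKH, hKdef]
    calc V * Matrix.diagonal g * star V * Aᴴ * (A * (V * Matrix.diagonal g * star V))
        = V * Matrix.diagonal g * star V * (Aᴴ * (A * (V * Matrix.diagonal g * star V))) := by
          rw [mul_assoc]
      _ = V * Matrix.diagonal g * star V * ((Aᴴ * A) * (V * Matrix.diagonal g * star V)) := by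
          rw [← mul_assoc Aᴴ]
      _ = V * Matrix.diagonal g * star V *
            ((V * Matrix.diagonal (c * c) * star V) * (V * Matrix.diagonal g * star V)) := by
          rw [hAA]
      _ = V * Matrix.diagonal g * star V * (V * Matrix.diagonal (c * c * g) * star V) := by
          rw [key]
      _ = V * Matrix.diagonal (g * (c * c * g)) * star V := key _ _
      _ = V * Matrix.diagonal h * star V := by rw [hgccg]
  set R := V * Matrix.diagonal h * star V with hRdef
  have hRR : R * R = R := by rw [hRdef, key, hhh]
  have hRH : Rᴴ = R := by rw [hRdef, conjT, hstarh]
  have hRnorm : ‖R‖ ≤ 1 := by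
    have e1 : ‖R‖ * ‖R‖ = ‖R‖ := by
      rw [← Matrix.l2_opNorm_conjTranspose_mul_self R, hRH, hRR]
    nlinarith [norm_nonneg R]
  have hKnorm : ‖K‖ ≤ 1 := by
    have e2 : ‖Kᴴ‖ * ‖Kᴴ‖ = ‖R‖ := by
      rw [← hKKH, ← Matrix.l2_opNorm_conjTranspose_mul_self Kᴴ,
        Matrix.conjTranspose_conjTranspose]
    have e3 : ‖Kᴴ‖ ≤ 1 := by nlinarith [norm_nonneg Kᴴ, hRnorm]
    calc ‖K‖ = ‖Kᴴ‖ := (Matrix.l2_opNorm_conjTranspose K).symm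
      _ ≤ 1 := e3
  exact ⟨K, hKnorm, by rw [hmat]; exact hKA, by rw [hmat]; exact hKP⟩

lemma re_trace_le_traceNorm {d : ℕ} (B A : Matrix (Fin d) (Fin d) ℂ) :
    (Matrix.trace (B * A)).re ≤ ‖B‖ * traceNorm A := by
  obtain ⟨K, hK, -, hKP⟩ := exists_polar A
  have hA : (Aᴴ * A).PosSemidef := Matrix.posSemidef_conjTranspose_mul_self A
  have hPpsd : (matSqrt (Aᴴ * A)).PosSemidef := by
    rw [matSqrt_of_psd hA]; exact hA.posSemidef_sqrt
  have h1 : (Matrix.trace (B * A)).re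
      ≤ ‖B * Kᴴ‖ * (Matrix.trace (matSqrt (Aᴴ * A))).re := by
    have := re_trace_mul_psd_le (B * Kᴴ) (matSqrt (Aᴴ * A)) hPpsd
    rwa [mul_assoc, hKP] at this
  have h2 : ‖B * Kᴴ‖ ≤ ‖B‖ := by
    calc ‖B * Kᴴ‖ ≤ ‖B‖ * ‖Kᴴ‖ := Matrix.l2_opNorm_mul B Kᴴ
      _ ≤ ‖B‖ * 1 := by
          have : ‖Kᴴ‖ = ‖K‖ := Matrix.l2_opNorm_conjTranspose K
          rw [this]
          exact mul_le_mul_of_nonneg_left hK (norm_nonneg B)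
      _ = ‖B‖ := mul_one _
  calc (Matrix.trace (B * A)).re ≤ ‖B * Kᴴ‖ * (Matrix.trace (matSqrt (Aᴴ * A))).re := h1
    _ ≤ ‖B‖ * traceNorm A := by
        exact mul_le_mul_of_nonneg_right h2 (by
          have := traceNorm_nonneg A
          rwa [traceNorm] at this)

lemma traceNorm_triangle {d : ℕ} (A B : Matrix (Fin d) (Fin d) ℂ) :
    traceNorm (A + B) ≤ traceNorm A + traceNorm B := by
  obtain ⟨K, hK, hKA, -⟩ := exists_polar (A + B)
  have h0 : traceNorm (A + B) = (Matrix.trace (K * (A + B))).re := by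
    rw [hKA, traceNorm]
  rw [h0, mul_add, Matrix.trace_add, Complex.add_re]
  have hA := re_trace_le_traceNorm K A
  have hB := re_trace_le_traceNorm K B
  have hA' : (Matrix.trace (K * A)).re ≤ traceNorm A := by
    calc (Matrix.trace (K * A)).re ≤ ‖K‖ * traceNorm A := hA
      _ ≤ 1 * traceNorm A := mul_le_mul_of_nonneg_right hK (traceNorm_nonneg A)
      _ = traceNorm A := one_mul _
  have hB' : (Matrix.trace (K * B)).re ≤ traceNorm B := by
    calc (Matrix.trace (K * B)).re ≤ ‖K‖ * traceNorm B := hB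
      _ ≤ 1 * traceNorm B := mul_le_mul_of_nonneg_right hK (traceNorm_nonneg B)
      _ = traceNorm B := one_mul _
  linarith

lemma traceNorm_conj_le {d : ℕ} (X Y ρ : Matrix (Fin d) (Fin d) ℂ) :
    traceNorm (X * ρ * Y) ≤ ‖X‖ * ‖Y‖ * traceNorm ρ := by
  obtain ⟨K, hK, hKA, -⟩ := exists_polar (X * ρ * Y)
  have h0 : traceNorm (X * ρ * Y) = (Matrix.trace ((Y * K * X) * ρ)).re := by
    rw [traceNorm, ← hKA]
    congr 1
    calc Matrix.trace (K * (X * ρ * Y)) = Matrix.trace ((K * (X * ρ)) * Y) := by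
          simp only [mul_assoc]
      _ = Matrix.trace (Y * (K * (X * ρ))) := Matrix.trace_mul_comm _ _
      _ = Matrix.trace ((Y * K * X) * ρ) := by simp only [mul_assoc]
  rw [h0]
  have h1 : ‖Y * K * X‖ ≤ ‖X‖ * ‖Y‖ := by
    calc ‖Y * K * X‖ ≤ ‖Y * K‖ * ‖X‖ := Matrix.l2_opNorm_mul _ _
      _ ≤ ‖Y‖ * ‖K‖ * ‖X‖ :=
          mul_le_mul_of_nonneg_right (Matrix.l2_opNorm_mul _ _) (norm_nonneg X)
      _ ≤ ‖Y‖ * 1 * ‖X‖ := by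
          have := mul_le_mul_of_nonneg_left hK (norm_nonneg Y)
          exact mul_le_mul_of_nonneg_right this (norm_nonneg X)
      _ = ‖X‖ * ‖Y‖ := by ring
  calc (Matrix.trace ((Y * K * X) * ρ)).re ≤ ‖Y * K * X‖ * traceNorm ρ :=
        re_trace_le_traceNorm _ _
    _ ≤ ‖X‖ * ‖Y‖ * traceNorm ρ := mul_le_mul_of_nonneg_right h1 (traceNorm_nonneg ρ)



/-- Any approximation of the contraction semigroup `e^{tG}` transfers to a completely positive
approximation of its conjugation semigroup:
if `‖exp(tG)‖ ≤ 1` for all `t ≥ 0` and `‖exp(Δt G) − M‖ ≤ C Δt^{N+1}`, then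
`‖exp(Δt G) ρ exp(Δt G)ᴴ − M ρ Mᴴ‖₁ ≤ C Δt^{N+1} (2 + C Δt^{N+1}) ‖ρ‖₁`. -/
theorem stmt9 {d : ℕ} (G M : Matrix (Fin d) (Fin d) ℂ) (Δt : ℝ) (hΔt : 0 ≤ Δt)
    (N : ℕ) (C : ℝ) (hC : 0 ≤ C)
    (hcontr : ∀ t : ℝ, 0 ≤ t → opNorm (NormedSpace.exp ((t : ℂ) • G)) ≤ 1)
    (happrox : opNorm (NormedSpace.exp ((Δt : ℂ) • G) - M) ≤ C * Δt ^ (N + 1)) :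
    ∀ ρ : Matrix (Fin d) (Fin d) ℂ,
      traceNorm (NormedSpace.exp ((Δt : ℂ) • G) * ρ * (NormedSpace.exp ((Δt : ℂ) • G))ᴴ
          - M * ρ * Mᴴ)
        ≤ C * Δt ^ (N + 1) * (2 + C * Δt ^ (N + 1)) * traceNorm ρ := by
  intro ρ
  set E := NormedSpace.exp ((Δt : ℂ) • G) with hEdef
  set D := E - M with hDdef
  set ε := C * Δt ^ (N + 1) with hεdef
  have hε : 0 ≤ ε := mul_nonneg hC (pow_nonneg hΔt _)
  have hE : ‖E‖ ≤ 1 := by rw [← opNorm_eq]; exact hcontr Δt hΔt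
  have hD : ‖D‖ ≤ ε := by rw [← opNorm_eq]; exact happrox
  have hM : ‖M‖ ≤ 1 + ε := by
    have : M = E - D := by rw [hDdef, sub_sub_cancel]
    rw [this]
    calc ‖E - D‖ ≤ ‖E‖ + ‖D‖ := norm_sub_le E D
      _ ≤ 1 + ε := add_le_add hE hD
  have hsplit : E * ρ * Eᴴ - M * ρ * Mᴴ = D * ρ * Eᴴ + M * ρ * Dᴴ := by
    rw [hDdef, Matrix.conjTranspose_sub]
    noncomm_ring
  have hEH : ‖Eᴴ‖ = ‖E‖ := Matrix.l2_opNorm_conjTranspose E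
  have hDH : ‖Dᴴ‖ = ‖D‖ := Matrix.l2_opNorm_conjTranspose D
  have h1 : traceNorm (D * ρ * Eᴴ) ≤ ε * traceNorm ρ := by
    calc traceNorm (D * ρ * Eᴴ) ≤ ‖D‖ * ‖Eᴴ‖ * traceNorm ρ := traceNorm_conj_le _ _ _
      _ ≤ ε * traceNorm ρ := by
          have : ‖D‖ * ‖Eᴴ‖ ≤ ε * 1 := by
            rw [hEH]
            exact mul_le_mul hD hE (norm_nonneg E) hε
          rw [mul_one] at this
          exact mul_le_mul_of_nonneg_right this (traceNorm_nonneg ρ)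
  have h2 : traceNorm (M * ρ * Dᴴ) ≤ (1 + ε) * ε * traceNorm ρ := by
    calc traceNorm (M * ρ * Dᴴ) ≤ ‖M‖ * ‖Dᴴ‖ * traceNorm ρ := traceNorm_conj_le _ _ _
      _ ≤ (1 + ε) * ε * traceNorm ρ := by
          have : ‖M‖ * ‖Dᴴ‖ ≤ (1 + ε) * ε := by
            rw [hDH]
            exact mul_le_mul hM hD (norm_nonneg D) (by linarith)
          exact mul_le_mul_of_nonneg_right this (traceNorm_nonneg ρ)
  calc traceNorm (E * ρ * Eᴴ - M * ρ * Mᴴ)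
      = traceNorm (D * ρ * Eᴴ + M * ρ * Dᴴ) := by rw [hsplit]
    _ ≤ traceNorm (D * ρ * Eᴴ) + traceNorm (M * ρ * Dᴴ) := traceNorm_triangle _ _
    _ ≤ ε * traceNorm ρ + (1 + ε) * ε * traceNorm ρ := add_le_add h1 h2
    _ = ε * (2 + ε) * traceNorm ρ := by ring
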